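/- Let K be a local field of characteristic 0 of odd residue characteristic, and let L = K(√d) be a ramified quadratic extension. Writing O_L = O_K[α] with α = a + b√d, the valuation w(ᾱ − α) = w(2b√d) is even if and only if d is a unit of O_K up to squares; consequently, the discriminant exponent e of the cubic étale algebra F = K(√d) × K satisfies: the Hecke ideal H_{F/K} = (m_1 m_2)^e is a square if and only if d ∈ O_K^× modulo squares. -/

import Mathlib

open IsLocalRing Ideal

section aux
variable {R : Type*} [CommRing R] [IsDomain R] [IsDiscreteValuationRing R]

lemma aux_ord_exists {x : R} (hx : x ≠ 0) :
    ∃ n : ℕ, Ideal.span {x} = maximalIdeal R ^ n := by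
  obtain ⟨π, hπ⟩ := IsDiscreteValuationRing.exists_irreducible R
  obtain ⟨n, u, hu⟩ := IsDiscreteValuationRing.eq_unit_mul_pow_irreducible hx hπ
  refine ⟨n, ?_⟩
  rw [(IsDiscreteValuationRing.irreducible_iff_uniformizer π).1 hπ, Ideal.span_singleton_pow,
    Ideal.span_singleton_eq_span_singleton]
  exact (Associated.symm ⟨u, by rw [hu]; ring⟩)

lemma aux_pow_inj {i j : ℕ}
    (h : maximalIdeal R ^ i = maximalIdeal R ^ j) : i = j := by
  obtain ⟨π, hπ⟩ := IsDiscreteValuationRing.exists_irreducible R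
  rw [(IsDiscreteValuationRing.irreducible_iff_uniformizer π).1 hπ, Ideal.span_singleton_pow,
    Ideal.span_singleton_pow, Ideal.span_singleton_eq_span_singleton] at h
  have h1 : IsDiscreteValuationRing.addVal R (π ^ i) = IsDiscreteValuationRing.addVal R (π ^ j) :=
    le_antisymm (IsDiscreteValuationRing.addVal_le_iff_dvd.2 h.dvd)
      (IsDiscreteValuationRing.addVal_le_iff_dvd.2 h.symm.dvd)
  rw [hπ.addVal_pow, hπ.addVal_pow] at h1
  exact_mod_cast h1

lemma aux_ord_mul {x y : R} {m n : ℕ} (hx : Ideal.span {x} = maximalIdeal R ^ m)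
    (hy : Ideal.span {y} = maximalIdeal R ^ n) :
    Ideal.span {x * y} = maximalIdeal R ^ (m + n) := by
  rw [← Ideal.span_singleton_mul_span_singleton, hx, hy, pow_add]

lemma aux_ord_pow {x : R} {m : ℕ} (hx : Ideal.span {x} = maximalIdeal R ^ m) (k : ℕ) :
    Ideal.span {x ^ k} = maximalIdeal R ^ (m * k) := by
  rw [← Ideal.span_singleton_pow, hx, pow_mul]

end aux

/-- let `K` be a local field of characteristic `0` with valuation ring `A`
(a DVR) and let `L = K(√d)` be a ramified quadratic extension with valuation ring `B`
(a DVR with normalized valuation `w`), so `F = L × K` is the associated cubic étale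
algebra with primes `m₁` (from `L`) and `m₂` (from `K`).  Write `𝓞_L = 𝓞_K[α]` with
`α = a + b√d`, and let `e = w(σα - α) = w(2b√d)` be the exponent of the different of
`L/K` (Serre, Local Fields, p. 64), where `σ` is the nontrivial automorphism.  Then
`e` is even if and only if `d` is a unit of `𝓞_K` up to squares; consequently the
Hecke ideal `H_{F/K} = (m₁ m₂)^e` is a square (equivalently `m₁^e` is the square of
an ideal of `B`) if and only if `d ∈ 𝓞_K^×` modulo squares. -/
theorem stmt6 (A B K L : Type*) [CommRing A] [IsDomain A] [IsDiscreteValuationRing A]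
    [CommRing B] [IsDomain B] [IsDiscreteValuationRing B]
    [Field K] [Field L] [CharZero K]
    [Algebra A K] [IsFractionRing A K] [Algebra B L] [IsFractionRing B L]
    [Algebra A B] [Algebra K L] [Algebra A L]
    [IsScalarTower A K L] [IsScalarTower A B L]
    (d : K) (hd : d ≠ 0) (sq : L) (hsq : sq ^ 2 = algebraMap K L d)
    (hdeg : Module.finrank K L = 2)
    (hram : Ideal.map (algebraMap A B) (IsLocalRing.maximalIdeal A) =
      IsLocalRing.maximalIdeal B ^ 2)
    (σ : L ≃ₐ[K] L) (hσ : σ sq = -sq)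
    (α : B) (hgen : Algebra.adjoin A {α} = (⊤ : Subalgebra A B))
    (a b : K) (hb : b ≠ 0)
    (hα : algebraMap B L α = algebraMap K L a + algebraMap K L b * sq)
    (δ : B) (hδ : algebraMap B L δ = σ (algebraMap B L α) - algebraMap B L α)
    (e : ℕ) (he : Ideal.span {δ} = IsLocalRing.maximalIdeal B ^ e) :
    (Even e ↔ ∃ u : A, IsUnit u ∧ ∃ y : K, y ≠ 0 ∧ d = algebraMap A K u * y ^ 2) ∧
    ((∃ J : Ideal B, IsLocalRing.maximalIdeal B ^ e = J ^ 2) ↔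
      ∃ u : A, IsUnit u ∧ ∃ y : K, y ≠ 0 ∧ d = algebraMap A K u * y ^ 2) := by
  have injAK : Function.Injective (algebraMap A K) := IsFractionRing.injective A K
  have injBL : Function.Injective (algebraMap B L) := IsFractionRing.injective B L
  -- write b = p/q, d = r/s
  obtain ⟨p, q, hqmem, hpq⟩ := IsFractionRing.div_surjective (A := A) b
  obtain ⟨r, s, hsmem, hrs⟩ := IsFractionRing.div_surjective (A := A) d
  have hqK : algebraMap A K q ≠ 0 :=
    IsFractionRing.to_map_ne_zero_of_mem_nonZeroDivisors hqmem
  have hsK : algebraMap A K s ≠ 0 :=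
    IsFractionRing.to_map_ne_zero_of_mem_nonZeroDivisors hsmem
  have hpK : algebraMap A K p ≠ 0 := by
    intro h; rw [← hpq, h, zero_div] at hb; exact hb rfl
  have hrK : algebraMap A K r ≠ 0 := by
    intro h; rw [← hrs, h, zero_div] at hd; exact hd rfl
  have hbq : b * algebraMap A K q = algebraMap A K p := by
    rw [← hpq, div_mul_cancel₀ _ hqK]
  have hds : d * algebraMap A K s = algebraMap A K r := by
    rw [← hrs, div_mul_cancel₀ _ hsK]
  have h2K : (algebraMap A K) 2 = 2 := map_ofNat _ 2
  have h2A : (2 : A) ≠ 0 := by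
    intro h
    have : (2 : K) = 0 := by rw [← h2K, h, map_zero]
    exact two_ne_zero this
  -- the key identity in K
  have keyK : ((2 * b) ^ 2 * d) * algebraMap A K (q ^ 2 * s)
      = algebraMap A K (2 ^ 2 * p ^ 2 * r) := by
    simp only [_root_.map_mul, _root_.map_pow, h2K]
    calc (2 * b) ^ 2 * d * ((algebraMap A K q) ^ 2 * algebraMap A K s)
        = 2 ^ 2 * (b * algebraMap A K q) ^ 2 * (d * algebraMap A K s) := by ring
      _ = 2 ^ 2 * (algebraMap A K p) ^ 2 * algebraMap A K r := by rw [hbq, hds]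
  -- δ in L
  have hδL : algebraMap B L δ = algebraMap K L (-(2 * b)) * sq := by
    rw [hδ, hα, map_add, _root_.map_mul, σ.commutes, σ.commutes, hσ, map_neg, _root_.map_mul, map_ofNat]
    ring
  have hδ2 : (algebraMap B L δ) ^ 2 = algebraMap K L ((2 * b) ^ 2 * d) := by
    rw [hδL, mul_pow, hsq, ← _root_.map_pow, ← _root_.map_mul]
    congr 1
    ring
  -- pull the identity into B
  have keyB : δ ^ 2 * algebraMap A B (q ^ 2 * s) = algebraMap A B (2 ^ 2 * p ^ 2 * r) := by
    apply injBL
    rw [_root_.map_mul, _root_.map_pow, ← IsScalarTower.algebraMap_apply A B L,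
      ← IsScalarTower.algebraMap_apply A B L, IsScalarTower.algebraMap_apply A K L,
      IsScalarTower.algebraMap_apply A K L (2 ^ 2 * p ^ 2 * r), hδ2, ← _root_.map_mul, keyK]
  -- element orders in A
  have hp0 : p ≠ 0 := fun h => hpK (by rw [h, map_zero])
  have hq0 : q ≠ 0 := fun h => hqK (by rw [h, map_zero])
  have hr0 : r ≠ 0 := fun h => hrK (by rw [h, map_zero])
  have hs0 : s ≠ 0 := fun h => hsK (by rw [h, map_zero])
  obtain ⟨n2, hn2⟩ := aux_ord_exists h2A
  obtain ⟨np, hnp⟩ := aux_ord_exists hp0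
  obtain ⟨nq, hnq⟩ := aux_ord_exists hq0
  obtain ⟨nr, hnr⟩ := aux_ord_exists hr0
  obtain ⟨ns, hns⟩ := aux_ord_exists hs0
  -- ramification: spans in B of images of elements of A
  have ram : ∀ (x : A) (n : ℕ), Ideal.span {x} = maximalIdeal A ^ n →
      Ideal.span {algebraMap A B x} = maximalIdeal B ^ (2 * n) := by
    intro x n hx
    have h1 : Ideal.span {algebraMap A B x} = Ideal.map (algebraMap A B) (Ideal.span {x}) := by
      rw [Ideal.map_span, Set.image_singleton]
    rw [h1, hx, Ideal.map_pow, hram, ← pow_mul, mul_comm]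
  -- the parity equation
  have lhs : Ideal.span {δ ^ 2 * algebraMap A B (q ^ 2 * s)}
      = maximalIdeal B ^ (e * 2 + 2 * (nq * 2 + ns)) :=
    aux_ord_mul (aux_ord_pow he 2) (ram _ _ (aux_ord_mul (aux_ord_pow hnq 2) hns))
  have rhs : Ideal.span {algebraMap A B (2 ^ 2 * p ^ 2 * r)}
      = maximalIdeal B ^ (2 * (n2 * 2 + np * 2 + nr)) :=
    ram _ _ (aux_ord_mul (aux_ord_mul (aux_ord_pow hn2 2) (aux_ord_pow hnp 2)) hnr)
  have eqn : e * 2 + 2 * (nq * 2 + ns) = 2 * (n2 * 2 + np * 2 + nr) := by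
    apply aux_pow_inj (R := B)
    rw [← lhs, ← rhs, keyB]
  have hpar : Even e ↔ Even (nr + ns) := by
    rw [Nat.even_iff, Nat.even_iff]; omega
  -- the unit-square characterization of `Even (nr + ns)`
  have hchar : (∃ u : A, IsUnit u ∧ ∃ y : K, y ≠ 0 ∧ d = algebraMap A K u * y ^ 2)
      ↔ Even (nr + ns) := by
    constructor
    · rintro ⟨u, hu, y, hy0, hy⟩
      obtain ⟨p', q', hq'mem, hpq'⟩ := IsFractionRing.div_surjective (A := A) y
      have hq'K : algebraMap A K q' ≠ 0 :=
        IsFractionRing.to_map_ne_zero_of_mem_nonZeroDivisors hq'mem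
      have hp'K : algebraMap A K p' ≠ 0 := fun h => hy0 (by rw [← hpq', h, zero_div])
      have hp'0 : p' ≠ 0 := fun h => hp'K (by rw [h, map_zero])
      have hq'0 : q' ≠ 0 := fun h => hq'K (by rw [h, map_zero])
      have hyq : y * algebraMap A K q' = algebraMap A K p' := by rw [← hpq', div_mul_cancel₀ _ hq'K]
      have kid : algebraMap A K (r * q' ^ 2) = algebraMap A K (u * (p' ^ 2 * s)) := by
        simp only [_root_.map_mul, _root_.map_pow]
        calc (algebraMap A K r) * (algebraMap A K q') ^ 2
            = (d * algebraMap A K s) * (algebraMap A K q') ^ 2 := by rw [hds]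
          _ = algebraMap A K u * (y * algebraMap A K q') ^ 2 * algebraMap A K s := by
              rw [hy]; ring
          _ = algebraMap A K u * ((algebraMap A K p') ^ 2 * algebraMap A K s) := by
              rw [hyq]; ring
      have kidA : r * q' ^ 2 = u * (p' ^ 2 * s) := injAK kid
      obtain ⟨np', hnp'⟩ := aux_ord_exists hp'0
      obtain ⟨nq', hnq'⟩ := aux_ord_exists hq'0
      have hu0 : Ideal.span {u} = maximalIdeal A ^ 0 := by
        rw [pow_zero, Ideal.span_singleton_eq_top.mpr hu]; exact Ideal.one_eq_top.symm
      have eq2 : nr + nq' * 2 = 0 + (np' * 2 + ns) := by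
        apply aux_pow_inj (R := A)
        rw [← aux_ord_mul hnr (aux_ord_pow hnq' 2),
          ← aux_ord_mul hu0 (aux_ord_mul (aux_ord_pow hnp' 2) hns), kidA]
      rw [Nat.even_iff]; omega
    · rintro hev
      obtain ⟨π, hπ⟩ := IsDiscreteValuationRing.exists_irreducible A
      have hπK : algebraMap A K π ≠ 0 := fun h => hπ.ne_zero (injAK (by rw [h, map_zero]))
      have hmA : maximalIdeal A = Ideal.span {π} :=
        (IsDiscreteValuationRing.irreducible_iff_uniformizer π).1 hπ
      have har : Associated (π ^ nr) r := by
        apply Ideal.span_singleton_eq_span_singleton.mp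
        rw [← Ideal.span_singleton_pow, ← hmA]
        exact hnr.symm
      have has : Associated (π ^ ns) s := by
        apply Ideal.span_singleton_eq_span_singleton.mp
        rw [← Ideal.span_singleton_pow, ← hmA]
        exact hns.symm
      obtain ⟨u1, hu1⟩ := har
      obtain ⟨u2, hu2⟩ := has
      obtain ⟨t, ht⟩ := hev
      refine ⟨↑(u1 * u2⁻¹), (u1 * u2⁻¹).isUnit,
        algebraMap A K π ^ ((t : ℤ) - ns), zpow_ne_zero _ hπK, ?_⟩
      have hone : algebraMap A K ↑u2⁻¹ * algebraMap A K ↑u2 = 1 := by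
        rw [← _root_.map_mul, Units.inv_mul, map_one]
      have hz : (algebraMap A K π ^ ((t : ℤ) - ns)) ^ 2 * algebraMap A K π ^ ns
          = algebraMap A K π ^ nr := by
        have h1 : (algebraMap A K π ^ ((t : ℤ) - ns)) ^ (2 : ℕ)
            = algebraMap A K π ^ (((t : ℤ) - ns) * 2) := by
          rw [← zpow_natCast (algebraMap A K π ^ ((t : ℤ) - ns)) 2, ← zpow_mul]
          norm_num
        rw [h1, ← zpow_natCast (algebraMap A K π) ns, ← zpow_add₀ hπK,
          ← zpow_natCast (algebraMap A K π) nr]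
        congr 1
        omega
      rw [← hrs, div_eq_iff hsK, ← hu1, ← hu2]
      push_cast [_root_.map_mul, _root_.map_pow]
      calc (algebraMap A K π) ^ nr * algebraMap A K ↑u1
          = (algebraMap A K π) ^ nr * algebraMap A K ↑u1 * 1 := by ring
        _ = (algebraMap A K π) ^ nr * algebraMap A K ↑u1
            * (algebraMap A K ↑u2⁻¹ * algebraMap A K ↑u2) := by rw [hone]
        _ = algebraMap A K ↑u1 * algebraMap A K ↑u2⁻¹
            * ((algebraMap A K π ^ ((t : ℤ) - ns)) ^ 2 * algebraMap A K π ^ ns)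
            * algebraMap A K ↑u2 := by rw [hz]; ring
        _ = algebraMap A K ↑u1 * algebraMap A K ↑u2⁻¹
            * (algebraMap A K π ^ ((t : ℤ) - ns)) ^ 2
            * ((algebraMap A K π) ^ ns * algebraMap A K ↑u2) := by ring
  -- squares of ideals in the DVR `B`
  have hsq2 : (∃ J : Ideal B, maximalIdeal B ^ e = J ^ 2) ↔ Even e := by
    constructor
    · rintro ⟨J, hJ⟩
      obtain ⟨π, hπ⟩ := IsDiscreteValuationRing.exists_irreducible B
      have hmB : maximalIdeal B = Ideal.span {π} :=
        (IsDiscreteValuationRing.irreducible_iff_uniformizer π).1 hπ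
      have hJ0 : J ≠ ⊥ := by
        rintro rfl
        have hb : maximalIdeal B ^ e = ⊥ := by rw [hJ, pow_two, Ideal.bot_mul]
        rw [hmB, Ideal.span_singleton_pow] at hb
        exact pow_ne_zero e hπ.ne_zero (Ideal.span_singleton_eq_bot.mp hb)
      obtain ⟨k, hk⟩ := IsDiscreteValuationRing.ideal_eq_span_pow_irreducible hJ0 hπ
      have hkk : maximalIdeal B ^ e = maximalIdeal B ^ (k * 2) := by
        rw [hJ, hk, ← Ideal.span_singleton_pow, ← hmB, ← pow_mul]
      exact ⟨k, by have := aux_pow_inj hkk; omega⟩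
    · rintro ⟨k, hk⟩
      exact ⟨maximalIdeal B ^ k, by rw [← pow_mul]; congr 1; omega⟩
  constructor
  · rw [hpar]; exact hchar.symm
  · rw [hsq2, hpar]; exact hchar.symm
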